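/- arXiv:1311.1259 — 4 statements merged into one kernel-verified Lean document; each statement's English description precedes it below -/
import Mathlib

section
/- Let A be an M × N matrix satisfying the restricted isometry property of order K+1 with constant δ < 1 and having unit-norm columns. Then for any support S with |S| ≤ K and any column index j ∉ S, the incoherence parameter γ := ‖A_{S^c}ᵀ A_S (A_Sᵀ A_S)^{−1}‖_∞ satisfies γ ≤ √K·δ/(1−δ), where ‖·‖_∞ is the maximum absolute row sum matrix norm. -/
open Matrix Finset

lemma sum_insert_subtype {α : Type*} [DecidableEq α] (S : Finset α) (j : α) (hj : j ∉ S)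
    (f : α → ℝ) :
    ∑ x : {x // x ∈ insert j S}, f x = f j + ∑ i : {x // x ∈ S}, f i := by
  rw [Finset.sum_coe_sort (insert j S) f, Finset.sum_coe_sort S f,
    Finset.sum_insert hj]

lemma cross_bound (Mdim N K : ℕ) (A : Matrix (Fin Mdim) (Fin N) ℝ) (δ : ℝ)
    (hcols : ∀ j, ∑ i, (A i j) ^ 2 = 1)
    (hRIP : ∀ T : Finset (Fin N), T.card ≤ K + 1 → ∀ v : {x // x ∈ T} → ℝ,
      (1 - δ) * (∑ i, (v i) ^ 2) ≤
          ∑ m, ((A.submatrix id (Subtype.val : {x // x ∈ T} → Fin N)).mulVec v m) ^ 2 ∧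
        ∑ m, ((A.submatrix id (Subtype.val : {x // x ∈ T} → Fin N)).mulVec v m) ^ 2 ≤
          (1 + δ) * (∑ i, (v i) ^ 2))
    (S : Finset (Fin N)) (hS : S.card ≤ K)
    (j : Fin N) (hj : j ∉ S) (v : {x // x ∈ S} → ℝ) :
    |∑ m, A m j * (A.submatrix id (Subtype.val : {x // x ∈ S} → Fin N)).mulVec v m|
      ≤ δ * Real.sqrt (∑ i, (v i) ^ 2) := by
  classical
  have hTcard : (insert j S).card ≤ K + 1 := by
    rw [Finset.card_insert_of_notMem hj]; omega
  -- general RIP consequence for combined vectors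
  have main : ∀ t : ℝ, ∀ w : {x // x ∈ S} → ℝ,
      (1 - δ) * (t ^ 2 + ∑ i, (w i) ^ 2) ≤
          t ^ 2 + 2 * t * (∑ m, A m j *
            (A.submatrix id (Subtype.val : {x // x ∈ S} → Fin N)).mulVec w m) +
          ∑ m, ((A.submatrix id (Subtype.val : {x // x ∈ S} → Fin N)).mulVec w m) ^ 2 ∧
        t ^ 2 + 2 * t * (∑ m, A m j *
            (A.submatrix id (Subtype.val : {x // x ∈ S} → Fin N)).mulVec w m) +
          ∑ m, ((A.submatrix id (Subtype.val : {x // x ∈ S} → Fin N)).mulVec w m) ^ 2 ≤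
          (1 + δ) * (t ^ 2 + ∑ i, (w i) ^ 2) := by
    intro t w
    set ut : Fin N → ℝ := fun k => if h : k ∈ S then w ⟨k, h⟩ else t with hut
    have hutj : ut j = t := by rw [hut]; exact dif_neg hj
    have hutS : ∀ i : {x // x ∈ S}, ut ↑i = w i := by
      intro i; rw [hut]; simp
    have h1 : ∑ x : {x // x ∈ insert j S}, (ut ↑x) ^ 2 = t ^ 2 + ∑ i, (w i) ^ 2 := by
      rw [sum_insert_subtype S j hj (fun k => (ut k) ^ 2), hutj]
      congr 1
      exact Finset.sum_congr rfl fun i _ => by rw [hutS i]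
    have h2 : ∀ m, (A.submatrix id (Subtype.val : {x // x ∈ insert j S} → Fin N)).mulVec
        (fun x => ut ↑x) m
        = A m j * t + (A.submatrix id (Subtype.val : {x // x ∈ S} → Fin N)).mulVec w m := by
      intro m
      show ∑ x : {x // x ∈ insert j S}, A m ↑x * ut ↑x = _
      rw [sum_insert_subtype S j hj (fun k => A m k * ut k), hutj]
      congr 1
      exact Finset.sum_congr rfl fun i _ => by rw [hutS i]; rfl
    have := hRIP (insert j S) hTcard (fun x => ut ↑x)
    rw [h1] at this
    have hexp : ∑ m, ((A.submatrix id (Subtype.val : {x // x ∈ insert j S} → Fin N)).mulVec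
        (fun x => ut ↑x) m) ^ 2
        = t ^ 2 + 2 * t * (∑ m, A m j *
            (A.submatrix id (Subtype.val : {x // x ∈ S} → Fin N)).mulVec w m) +
          ∑ m, ((A.submatrix id (Subtype.val : {x // x ∈ S} → Fin N)).mulVec w m) ^ 2 := by
      have e1 : ∀ m, ((A.submatrix id (Subtype.val : {x // x ∈ insert j S} → Fin N)).mulVec
          (fun x => ut ↑x) m) ^ 2
          = t ^ 2 * (A m j) ^ 2 + 2 * t * (A m j *
              (A.submatrix id (Subtype.val : {x // x ∈ S} → Fin N)).mulVec w m) +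
            ((A.submatrix id (Subtype.val : {x // x ∈ S} → Fin N)).mulVec w m) ^ 2 := by
        intro m; rw [h2 m]; ring
      simp_rw [e1, Finset.sum_add_distrib, ← Finset.mul_sum, hcols j]
      ring
    rw [hexp] at this
    exact this
  set C : ℝ := ∑ m, A m j *
    (A.submatrix id (Subtype.val : {x // x ∈ S} → Fin N)).mulVec v m with hC
  set Sv : ℝ := ∑ i, (v i) ^ 2 with hSv
  have hSv0 : 0 ≤ Sv := Finset.sum_nonneg fun i _ => sq_nonneg _
  have key : ∀ t : ℝ, 4 * t * C ≤ 2 * δ * (t ^ 2 + Sv) := by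
    intro t
    have hup := (main t v).2
    have hlo := (main t (-v)).1
    simp only [Matrix.mulVec_neg, Pi.neg_apply, neg_sq, mul_neg,
      Finset.sum_neg_distrib] at hlo
    linarith [hup, hlo]
  rcases eq_or_lt_of_le hSv0 with h0 | hpos
  · -- Sv = 0 : v = 0
    have hv : ∀ i : {x // x ∈ S}, v i = 0 := by
      intro i
      have := (Finset.sum_eq_zero_iff_of_nonneg (fun i _ => sq_nonneg (v i))).1 h0.symm i
        (Finset.mem_univ i)
      exact pow_eq_zero_iff (by norm_num) |>.1 this
    have hveq : v = 0 := funext fun i => hv i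
    have hC0 : C = 0 := by rw [hC, hveq]; simp
    rw [hC0, ← h0]
    simp
  · obtain ⟨t, ht0, ht2⟩ : ∃ t : ℝ, 0 < t ∧ t ^ 2 = Sv :=
      ⟨Real.sqrt Sv, Real.sqrt_pos.2 hpos, Real.sq_sqrt hSv0⟩
    have hsq : Real.sqrt Sv = t := by rw [← ht2, Real.sqrt_sq ht0.le]
    rw [hsq, abs_le]
    constructor
    · by_contra hcon
      push_neg at hcon
      have h1 : 4 * (-t) * C ≤ 2 * δ * ((-t) ^ 2 + Sv) := key (-t)
      have h2 : 2 * δ * ((-t) ^ 2 + Sv) = 4 * δ * t ^ 2 := by rw [neg_sq, ← ht2]; ring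
      have h4 : 0 < t * (-(C + δ * t)) := mul_pos ht0 (by linarith)
      nlinarith [h1, h2, h4]
    · by_contra hcon
      push_neg at hcon
      have h1 : 4 * t * C ≤ 2 * δ * (t ^ 2 + Sv) := key t
      have h2 : 2 * δ * (t ^ 2 + Sv) = 4 * δ * t ^ 2 := by rw [← ht2]; ring
      have h4 : 0 < t * (C - δ * t) := mul_pos ht0 (by linarith)
      nlinarith [h1, h2, h4]


/-- RIP of order `K+1` with constant `δ < 1` and unit-norm columns imply that the incoherence
parameter `γ = ‖A_{Sᶜ}ᵀ A_S (A_Sᵀ A_S)⁻¹‖_∞` (maximum absolute row sum) satisfies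
`γ ≤ √K * δ / (1 - δ)` for any support `S` with `|S| ≤ K`. -/
theorem rip_incoherence_bound
    (Mdim N K : ℕ) (A : Matrix (Fin Mdim) (Fin N) ℝ) (δ : ℝ) (hδ0 : 0 ≤ δ) (hδ : δ < 1)
    (hcols : ∀ j, ∑ i, (A i j) ^ 2 = 1)
    (hRIP : ∀ T : Finset (Fin N), T.card ≤ K + 1 → ∀ v : {x // x ∈ T} → ℝ,
      (1 - δ) * (∑ i, (v i) ^ 2) ≤
          ∑ m, ((A.submatrix id (Subtype.val : {x // x ∈ T} → Fin N)).mulVec v m) ^ 2 ∧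
        ∑ m, ((A.submatrix id (Subtype.val : {x // x ∈ T} → Fin N)).mulVec v m) ^ 2 ≤
          (1 + δ) * (∑ i, (v i) ^ 2))
    (S : Finset (Fin N)) (hS : S.card ≤ K)
    (AS : Matrix (Fin Mdim) {x // x ∈ S} ℝ)
    (hAS : AS = A.submatrix id (Subtype.val : {x // x ∈ S} → Fin N))
    (ASc : Matrix (Fin Mdim) {x // x ∈ Sᶜ} ℝ)
    (hASc : ASc = A.submatrix id (Subtype.val : {x // x ∈ Sᶜ} → Fin N))
    (γ : ℝ)
    (hγ : γ = ⨆ j : {x // x ∈ Sᶜ}, ∑ i : {x // x ∈ S}, |(AScᵀ * AS * (ASᵀ * AS)⁻¹) j i|) :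
    γ ≤ Real.sqrt K * δ / (1 - δ) := by
  classical
  subst hAS hASc hγ
  have hδ1 : 0 < 1 - δ := by linarith
  have hbd0 : 0 ≤ Real.sqrt K * δ / (1 - δ) := by positivity
  rcases isEmpty_or_nonempty {x // x ∈ Sᶜ} with hE | hNE
  · rw [Real.iSup_of_isEmpty]; exact hbd0
  apply ciSup_le
  intro j
  set B : Matrix (Fin Mdim) {x // x ∈ S} ℝ :=
    A.submatrix id (Subtype.val : {x // x ∈ S} → Fin N) with hB
  set G : Matrix {x // x ∈ S} {x // x ∈ S} ℝ := Bᵀ * B with hG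
  have hjS : (j : Fin N) ∉ S := by
    exact Finset.mem_compl.1 j.2
  -- the cross-correlation vector
  set r : {x // x ∈ S} → ℝ := fun i => ∑ m, A m ↑j * B m i with hr
  have cross : ∀ v : {x // x ∈ S} → ℝ,
      |∑ m, A m ↑j * B.mulVec v m| ≤ δ * Real.sqrt (∑ i, (v i) ^ 2) :=
    fun v => cross_bound Mdim N K A δ hcols hRIP S hS ↑j hjS v
  have hr_inner : ∀ v : {x // x ∈ S} → ℝ,
      ∑ i, r i * v i = ∑ m, A m ↑j * B.mulVec v m := by
    intro v
    simp_rw [hr, Finset.sum_mul]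
    rw [Finset.sum_comm]
    refine Finset.sum_congr rfl fun m _ => ?_
    rw [Matrix.mulVec, dotProduct, Finset.mul_sum]
    exact Finset.sum_congr rfl fun i _ => by ring
  -- norm bound on r
  have hrsum0 : 0 ≤ ∑ i, r i ^ 2 := Finset.sum_nonneg fun i _ => sq_nonneg _
  have hrnorm : ∑ i, r i ^ 2 ≤ δ ^ 2 := by
    have h := cross r
    rw [← hr_inner r] at h
    have e : ∑ i, r i * r i = ∑ i, r i ^ 2 := Finset.sum_congr rfl fun i _ => (sq (r i)).symm
    rw [e, abs_of_nonneg hrsum0] at h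
    have hs : Real.sqrt (∑ i, r i ^ 2) ^ 2 = ∑ i, r i ^ 2 := Real.sq_sqrt hrsum0
    nlinarith [h, hs, Real.sqrt_nonneg (∑ i, r i ^ 2), hδ0,
      sq_nonneg (Real.sqrt (∑ i, r i ^ 2) - δ)]
  -- RIP lower bound on S
  have hlow : ∀ v : {x // x ∈ S} → ℝ,
      (1 - δ) * ∑ i, (v i) ^ 2 ≤ ∑ m, (B.mulVec v m) ^ 2 :=
    fun v => (hRIP S (by omega) v).1
  -- quadratic form identity
  have quad : ∀ v : {x // x ∈ S} → ℝ,
      ∑ m, (B.mulVec v m) ^ 2 = ∑ i, G.mulVec v i * v i := by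
    intro v
    have e1 : ∑ m, (B.mulVec v m) ^ 2 = (B *ᵥ v) ⬝ᵥ (B *ᵥ v) := by
      simp [dotProduct, sq]
    rw [e1, Matrix.dotProduct_mulVec, ← Matrix.mulVec_transpose, Matrix.mulVec_mulVec, ← hG]
    simp [dotProduct]
  -- G is positive definite
  have hsymm : Gᵀ = G := by
    ext i k
    simp only [hG, Matrix.transpose_apply, Matrix.mul_apply]
    exact Finset.sum_congr rfl fun m _ => by simp [Matrix.transpose_apply, mul_comm]
  have hposG : G.PosDef := by
    rw [Matrix.posDef_iff_dotProduct_mulVec]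
    constructor
    · ext i k
      simp only [hG, Matrix.conjTranspose_apply, Matrix.mul_apply, Matrix.transpose_apply,
        star_trivial]
      exact Finset.sum_congr rfl fun m _ => mul_comm _ _
    · intro x hx
      have hxs : 0 < ∑ i, (x i) ^ 2 := by
        have hne : ∃ i, x i ≠ 0 := Function.ne_iff.1 hx
        obtain ⟨i, hi⟩ := hne
        exact Finset.sum_pos' (fun i _ => sq_nonneg _)
          ⟨i, Finset.mem_univ i, by positivity⟩
      have h1 := hlow x
      rw [quad x] at h1
      have h2 : star x ⬝ᵥ (G *ᵥ x) = ∑ i, G.mulVec x i * x i := by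
        simp [dotProduct, mul_comm]
      rw [h2]
      calc (0:ℝ) < (1 - δ) * ∑ i, (x i) ^ 2 := by positivity
        _ ≤ _ := h1
  have hdet : IsUnit G.det := hposG.det_pos.ne'.isUnit
  -- the row vector w
  set w : {x // x ∈ S} → ℝ := r ᵥ* G⁻¹ with hw
  have hrow : ∀ i, ((A.submatrix id (Subtype.val : {x // x ∈ Sᶜ} → Fin N))ᵀ * B * (Bᵀ * B)⁻¹) j i
      = w i := by
    intro i
    rw [Matrix.mul_apply]
    refine Finset.sum_congr rfl fun k _ => ?_
    congr 1
  have hGw : G *ᵥ w = r := by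
    rw [← hsymm, Matrix.mulVec_transpose, hw, Matrix.vecMul_vecMul,
      Matrix.nonsing_inv_mul G hdet, Matrix.vecMul_one]
  -- bound on w
  have hwsum0 : 0 ≤ ∑ i, w i ^ 2 := Finset.sum_nonneg fun i _ => sq_nonneg _
  have hXle : (1 - δ) * ∑ i, w i ^ 2 ≤ ∑ i, r i * w i := by
    have h1 := hlow w
    rw [quad w, hGw] at h1
    exact h1
  have hCS : (∑ i, r i * w i) ^ 2 ≤ δ ^ 2 * ∑ i, w i ^ 2 := by
    calc (∑ i, r i * w i) ^ 2 ≤ (∑ i, r i ^ 2) * ∑ i, w i ^ 2 :=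
          Finset.sum_mul_sq_le_sq_mul_sq _ _ _
      _ ≤ δ ^ 2 * ∑ i, w i ^ 2 := by
          apply mul_le_mul_of_nonneg_right hrnorm hwsum0
  have hP : ∑ i, w i ^ 2 ≤ (δ / (1 - δ)) ^ 2 := by
    rcases eq_or_lt_of_le hwsum0 with h0 | hpos
    · rw [← h0]; positivity
    · have h1 : ((1 - δ) * ∑ i, w i ^ 2) ^ 2 ≤ (∑ i, r i * w i) ^ 2 := by
        apply sq_le_sq'
        · nlinarith [hXle, hwsum0]
        · exact hXle
      have h2 : (1 - δ) ^ 2 * (∑ i, w i ^ 2) ≤ δ ^ 2 := by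
        have := h1.trans hCS
        nlinarith [hpos]
      rw [div_pow]
      rw [le_div_iff₀ (by positivity)]
      linarith [h2]
  -- conclude
  have hfin : ∑ i, |w i| ≤ Real.sqrt K * (δ / (1 - δ)) := by
    have hcard : (Fintype.card {x // x ∈ S} : ℝ) ≤ (K : ℝ) := by
      rw [Fintype.card_coe]
      exact_mod_cast hS
    have h1 : (∑ i, |w i|) ^ 2 ≤ (Fintype.card {x // x ∈ S} : ℝ) * ∑ i, w i ^ 2 := by
      have := sq_sum_le_card_mul_sum_sq (s := (univ : Finset {x // x ∈ S}))
        (f := fun i => |w i|)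
      simpa [sq_abs, Finset.card_univ] using this
    have h2 : (∑ i, |w i|) ^ 2 ≤ (K : ℝ) * (δ / (1 - δ)) ^ 2 := by
      calc (∑ i, |w i|) ^ 2 ≤ (Fintype.card {x // x ∈ S} : ℝ) * ∑ i, w i ^ 2 := h1
        _ ≤ (K : ℝ) * (δ / (1 - δ)) ^ 2 := by
            apply mul_le_mul hcard hP hwsum0 (by positivity)
    have h3 : ∑ i, |w i| ≤ Real.sqrt ((K : ℝ) * (δ / (1 - δ)) ^ 2) := by
      rw [Real.le_sqrt (Finset.sum_nonneg fun i _ => abs_nonneg _) (by positivity)]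
      exact h2
    calc ∑ i, |w i| ≤ Real.sqrt ((K : ℝ) * (δ / (1 - δ)) ^ 2) := h3
      _ = Real.sqrt K * (δ / (1 - δ)) := by
          rw [Real.sqrt_mul (by positivity), Real.sqrt_sq (by positivity)]
  calc ∑ i, |((A.submatrix id (Subtype.val : {x // x ∈ Sᶜ} → Fin N))ᵀ * B * (Bᵀ * B)⁻¹) j i|
      = ∑ i, |w i| := Finset.sum_congr rfl fun i _ => by rw [hrow i]
    _ ≤ Real.sqrt K * (δ / (1 - δ)) := hfin
    _ = Real.sqrt K * δ / (1 - δ) := by ring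
end

section
/- Suppose y = A x* + e with x* supported on S, A_Sᵀ A_S invertible, and suppose there exists a vector x̂ supported on S satisfying the LASSO KKT conditions with the strict dual feasibility condition ‖A_{S^c}ᵀ(y − A x̂)‖_∞ < h. Then every LASSO minimizer x with parameter h has support contained in S, i.e., x(j) = 0 for all j ∈ S^c. -/
open Matrix Finset

/-- Primal-dual witness uniqueness: if `y = A x* + e` with `x*` supported on `S`,
`A_Sᵀ A_S` invertible, and some `x̂` supported on `S` satisfies the LASSO KKT conditions
with strict dual feasibility on `Sᶜ`, then every LASSO minimizer with parameter `h` is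
supported in `S`. -/
theorem lasso_support_uniqueness
    (Mdim N : ℕ) (A : Matrix (Fin Mdim) (Fin N) ℝ) (h : ℝ) (hh : 0 < h)
    (S : Finset (Fin N)) (xstar : Fin N → ℝ) (ebar : Fin Mdim → ℝ)
    (y : Fin Mdim → ℝ) (hy : y = A.mulVec xstar + ebar)
    (hxstar : ∀ i, i ∉ S → xstar i = 0)
    (hGram : IsUnit ((A.submatrix id (Subtype.val : {x // x ∈ S} → Fin N))ᵀ *
      A.submatrix id (Subtype.val : {x // x ∈ S} → Fin N)))
    (xhat : Fin N → ℝ)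
    (hxhatS : ∀ j, j ∉ S → xhat j = 0)
    (hKKT1 : ∀ i : Fin N, xhat i ≠ 0 →
      ∑ m, A m i * (y m - A.mulVec xhat m) = h * Real.sign (xhat i))
    (hKKT2 : ∀ i : Fin N, |∑ m, A m i * (y m - A.mulVec xhat m)| ≤ h)
    (hstrict : ∀ j, j ∉ S → |∑ m, A m j * (y m - A.mulVec xhat m)| < h) :
    ∀ x : Fin N → ℝ,
      (∀ z : Fin N → ℝ,
        (1 / 2) * (∑ m, (y m - A.mulVec x m) ^ 2) + h * ∑ j, |x j| ≤
          (1 / 2) * (∑ m, (y m - A.mulVec z m) ^ 2) + h * ∑ j, |z j|) →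
      ∀ j, j ∉ S → x j = 0 := by
  intro x hmin j hjS
  -- residual and correlation
  set r : Fin Mdim → ℝ := fun m => y m - A.mulVec xhat m with hr
  set c : Fin N → ℝ := fun i => ∑ m, A m i * r m with hc
  have hcx : ∀ i, c i * xhat i = h * |xhat i| := by
    intro i
    by_cases hi : xhat i = 0
    · simp [hi]
    · have h1 : c i = h * Real.sign (xhat i) := hKKT1 i hi
      rw [h1, mul_assoc]
      congr 1
      rcases lt_trichotomy (xhat i) 0 with hlt | heq | hgt
      · rw [Real.sign_of_neg hlt, abs_of_neg hlt]; ring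
      · exact absurd heq hi
      · rw [Real.sign_of_pos hgt, abs_of_pos hgt]; ring
  have hcb : ∀ i, |c i| ≤ h := hKKT2
  -- expand the objective at x
  have hq : ∀ m, y m - A.mulVec x m = r m - ∑ i, A m i * (x i - xhat i) := by
    intro m
    simp only [hr, Matrix.mulVec, dotProduct]
    have : ∑ i, A m i * (x i - xhat i) = ∑ i, A m i * x i - ∑ i, A m i * xhat i := by
      rw [← Finset.sum_sub_distrib]
      exact Finset.sum_congr rfl fun i _ => by ring
    rw [this]; ring
  set q : Fin Mdim → ℝ := fun m => ∑ i, A m i * (x i - xhat i) with hqdef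
  have hswap : ∑ m, r m * q m = ∑ i, c i * (x i - xhat i) := by
    simp only [hqdef, hc, Finset.mul_sum, Finset.sum_mul]
    rw [Finset.sum_comm]
    apply Finset.sum_congr rfl
    intro i _
    apply Finset.sum_congr rfl
    intro m _
    ring
  have hexp : ∑ m, (y m - A.mulVec x m) ^ 2
      = ∑ m, r m ^ 2 - 2 * ∑ i, c i * (x i - xhat i) + ∑ m, q m ^ 2 := by
    have : ∀ m, (y m - A.mulVec x m) ^ 2 = r m ^ 2 - 2 * (r m * q m) + q m ^ 2 := by
      intro m; rw [hq m]; ring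
    rw [Finset.sum_congr rfl (fun m _ => this m)]
    rw [Finset.sum_add_distrib, Finset.sum_sub_distrib, ← Finset.mul_sum, hswap]
  have hmin' := hmin xhat
  -- key inequality
  have hkey : (1/2) * ∑ m, q m ^ 2 + ∑ i, (h * |x i| - c i * x i) ≤ 0 := by
    have hsum1 : ∑ i, c i * xhat i = h * ∑ i, |xhat i| := by
      rw [Finset.mul_sum]; exact Finset.sum_congr rfl fun i _ => hcx i
    have : (1/2) * (∑ m, r m ^ 2 - 2 * ∑ i, c i * (x i - xhat i) + ∑ m, q m ^ 2)
        + h * ∑ j, |x j| ≤ (1/2) * (∑ m, r m ^ 2) + h * ∑ j, |xhat j| := by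
      rw [← hexp]; exact hmin'
    have hsplit : ∑ i, c i * (x i - xhat i) = ∑ i, c i * x i - ∑ i, c i * xhat i := by
      rw [← Finset.sum_sub_distrib]; exact Finset.sum_congr rfl fun i _ => by ring
    have hsum2 : ∑ i, (h * |x i| - c i * x i) = h * ∑ i, |x i| - ∑ i, c i * x i := by
      rw [Finset.sum_sub_distrib, Finset.mul_sum]
    rw [hsum2]
    rw [hsplit, hsum1] at this
    linarith
  have hterm : ∀ i, 0 ≤ h * |x i| - c i * x i := by
    intro i
    have h1 : c i * x i ≤ |c i * x i| := le_abs_self _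
    have h2 : |c i * x i| = |c i| * |x i| := abs_mul _ _
    have h3 : |c i| * |x i| ≤ h * |x i| :=
      mul_le_mul_of_nonneg_right (hcb i) (abs_nonneg _)
    linarith
  have hqnn : 0 ≤ (1/2) * ∑ m, q m ^ 2 := by
    apply mul_nonneg (by norm_num)
    exact Finset.sum_nonneg fun m _ => sq_nonneg _
  have hsumnn : 0 ≤ ∑ i, (h * |x i| - c i * x i) :=
    Finset.sum_nonneg fun i _ => hterm i
  have hsumzero : ∑ i, (h * |x i| - c i * x i) = 0 := le_antisymm (by linarith) hsumnn
  have hzero : h * |x j| - c j * x j = 0 :=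
    (Finset.sum_eq_zero_iff_of_nonneg (fun i _ => hterm i)).mp hsumzero j (Finset.mem_univ j)
  by_contra hxj
  have hxjpos : 0 < |x j| := abs_pos.mpr hxj
  have h1 : c j * x j ≤ |c j| * |x j| := by rw [← abs_mul]; exact le_abs_self _
  have h2 : |c j| * |x j| < h * |x j| := mul_lt_mul_of_pos_right (hstrict j hjS) hxjpos
  linarith
end

section
/- Let y = A x* + e with x* supported on S, |S| = K, A_Sᵀ A_S invertible, and let γ := ‖A_{S^c}ᵀ A_S (A_Sᵀ A_S)^{−1}‖_∞ < 1. Define the oracle estimate x̂_S := (A_Sᵀ A_S)^{−1}(A_Sᵀ y − h z_S) for any sign vector z_S ∈ [−1,1]^K. Then for each j ∈ S^c, the dual variable a_jᵀ(y − A_S x̂_S) decomposes as a_jᵀ Π e + h·a_jᵀ A_S (A_Sᵀ A_S)^{−1} z_S, where Π := I − A_S(A_Sᵀ A_S)^{−1}A_Sᵀ is the orthogonal projector onto the orthogonal complement of the column span of A_S; in particular |a_jᵀ(y − A_S x̂_S)| ≤ |a_jᵀ Π e| + hγ. -/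
open Matrix Finset

/-- Dual-variable decomposition in the primal-dual witness construction: with
`y = A x* + e`, `x*` supported on `S`, `G = A_Sᵀ A_S` invertible, sign vector
`z ∈ [-1,1]^S` and oracle estimate `x̂_S = G⁻¹ (A_Sᵀ y - h z)`, for each `j ∉ S` the dual
variable decomposes as `a_jᵀ(y - A_S x̂_S) = a_jᵀ Π e + h * a_jᵀ A_S G⁻¹ z`, where
`Π = I - A_S G⁻¹ A_Sᵀ`; in particular `|a_jᵀ(y - A_S x̂_S)| ≤ |a_jᵀ Π e| + h * γ` with
`γ` the maximum absolute row sum of `A_{Sᶜ}ᵀ A_S G⁻¹`. -/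
theorem lasso_dual_decomposition
    (Mdim N : ℕ) (A : Matrix (Fin Mdim) (Fin N) ℝ) (h : ℝ) (hh : 0 ≤ h)
    (S : Finset (Fin N)) (xstar : Fin N → ℝ) (e : Fin Mdim → ℝ)
    (y : Fin Mdim → ℝ) (hy : y = A.mulVec xstar + e)
    (hxstar : ∀ i, i ∉ S → xstar i = 0)
    (AS : Matrix (Fin Mdim) {x // x ∈ S} ℝ)
    (hAS : AS = A.submatrix id (Subtype.val : {x // x ∈ S} → Fin N))
    (hGram : IsUnit (ASᵀ * AS))
    (z : {x // x ∈ S} → ℝ) (hz : ∀ i, |z i| ≤ 1)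
    (xhatS : {x // x ∈ S} → ℝ)
    (hxhatS : xhatS = (ASᵀ * AS)⁻¹.mulVec (ASᵀ.mulVec y - h • z))
    (Pr : Matrix (Fin Mdim) (Fin Mdim) ℝ)
    (hPr : Pr = 1 - AS * (ASᵀ * AS)⁻¹ * ASᵀ)
    (γ : ℝ)
    (hγ : γ = ⨆ j : {x // x ∈ Sᶜ},
      ∑ i : {x // x ∈ S},
        |((A.submatrix id (Subtype.val : {x // x ∈ Sᶜ} → Fin N))ᵀ * AS * (ASᵀ * AS)⁻¹) j i|) :
    ∀ j : Fin N, j ∉ S →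
      (∑ m, A m j * (y m - AS.mulVec xhatS m) =
        ∑ m, A m j * Pr.mulVec e m +
          h * ∑ m, A m j * AS.mulVec ((ASᵀ * AS)⁻¹.mulVec z) m) ∧
      |∑ m, A m j * (y m - AS.mulVec xhatS m)| ≤ |∑ m, A m j * Pr.mulVec e m| + h * γ := by
  intro j hj
  have hdet : IsUnit (ASᵀ * AS).det := (Matrix.isUnit_iff_isUnit_det _).mp hGram
  have hGinv : (ASᵀ * AS)⁻¹ * (ASᵀ * AS) = 1 := Matrix.nonsing_inv_mul _ hdet
  -- Pr * AS = 0
  have hPrAS : Pr * AS = 0 := by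
    rw [hPr, Matrix.sub_mul, Matrix.one_mul]
    have : AS * (ASᵀ * AS)⁻¹ * ASᵀ * AS = AS := by
      rw [Matrix.mul_assoc, Matrix.mul_assoc, hGinv, Matrix.mul_one]
    rw [this, sub_self]
  -- A x* = AS (x* ∘ val)
  have hAx : A.mulVec xstar = AS.mulVec (fun i => xstar i.1) := by
    funext m
    rw [hAS]
    simp only [mulVec, dotProduct, submatrix_apply, id_eq]
    rw [Finset.sum_coe_sort S (fun i => A m i * xstar i)]
    exact (Finset.sum_subset (Finset.subset_univ S) (fun k _ hk => by
      rw [hxstar k hk, mul_zero])).symm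
  -- vector identity
  have hv : ∀ m, y m - AS.mulVec xhatS m =
      Pr.mulVec e m + h * AS.mulVec ((ASᵀ * AS)⁻¹.mulVec z) m := by
    have hvec : (fun m => y m - AS.mulVec xhatS m) =
        Pr.mulVec e + h • AS.mulVec ((ASᵀ * AS)⁻¹.mulVec z) := by
      have h1 : AS.mulVec xhatS
          = (AS * (ASᵀ * AS)⁻¹ * ASᵀ).mulVec y
            - h • AS.mulVec ((ASᵀ * AS)⁻¹.mulVec z) := by
        rw [hxhatS, ← Matrix.mulVec_mulVec, Matrix.mulVec_sub, Matrix.mulVec_smul,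
          Matrix.mulVec_sub, Matrix.mulVec_smul, Matrix.mulVec_mulVec,
          Matrix.mulVec_mulVec, Matrix.mulVec_mulVec]
      have h2 : Pr.mulVec y = Pr.mulVec e := by
        rw [hy, Matrix.mulVec_add, hAx, Matrix.mulVec_mulVec, hPrAS]
        simp
      funext m
      have : y m - AS.mulVec xhatS m = Pr.mulVec y m + h * AS.mulVec ((ASᵀ * AS)⁻¹.mulVec z) m := by
        rw [h1, hPr]
        simp [Matrix.sub_mulVec, Matrix.one_mulVec]
        ring
      rw [this, h2]
      simp
    intro m
    have := congrFun hvec m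
    simpa using this
  -- decomposition equality
  have heq : ∑ m, A m j * (y m - AS.mulVec xhatS m) =
      ∑ m, A m j * Pr.mulVec e m +
        h * ∑ m, A m j * AS.mulVec ((ASᵀ * AS)⁻¹.mulVec z) m := by
    calc ∑ m, A m j * (y m - AS.mulVec xhatS m)
        = ∑ m, (A m j * Pr.mulVec e m + h * (A m j * AS.mulVec ((ASᵀ * AS)⁻¹.mulVec z) m)) := by
          refine Finset.sum_congr rfl fun m _ => ?_
          rw [hv m]; ring
      _ = _ := by rw [Finset.sum_add_distrib, ← Finset.mul_sum]
  refine ⟨heq, ?_⟩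
  -- bound the second term
  set j' : {x // x ∈ Sᶜ} := ⟨j, by simpa using hj⟩ with hj'
  set B := (A.submatrix id (Subtype.val : {x // x ∈ Sᶜ} → Fin N))ᵀ * AS * (ASᵀ * AS)⁻¹ with hB
  have hsum : ∑ m, A m j * AS.mulVec ((ASᵀ * AS)⁻¹.mulVec z) m = B.mulVec z j' := by
    have : B.mulVec z = (A.submatrix id (Subtype.val : {x // x ∈ Sᶜ} → Fin N))ᵀ.mulVec
        (AS.mulVec ((ASᵀ * AS)⁻¹.mulVec z)) := by
      rw [Matrix.mulVec_mulVec, Matrix.mulVec_mulVec, hB, Matrix.mul_assoc]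
    rw [this]
    simp [mulVec, dotProduct, hj']
  have hrow : |B.mulVec z j'| ≤ ∑ i, |B j' i| := by
    calc |B.mulVec z j'| = |∑ i, B j' i * z i| := by simp [mulVec, dotProduct]
      _ ≤ ∑ i, |B j' i * z i| := Finset.abs_sum_le_sum_abs _ _
      _ ≤ ∑ i, |B j' i| := by
          refine Finset.sum_le_sum fun i _ => ?_
          rw [abs_mul]
          exact mul_le_of_le_one_right (abs_nonneg _) (hz i)
  have hγle : ∑ i, |B j' i| ≤ γ := by
    rw [hγ]
    exact le_ciSup (f := fun j'' : {x // x ∈ Sᶜ} => ∑ i, |B j'' i|)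
      (Set.Finite.bddAbove (Set.finite_range _)) j'
  calc |∑ m, A m j * (y m - AS.mulVec xhatS m)|
      = |∑ m, A m j * Pr.mulVec e m + h * ∑ m, A m j * AS.mulVec ((ASᵀ * AS)⁻¹.mulVec z) m| := by
        rw [heq]
    _ ≤ |∑ m, A m j * Pr.mulVec e m| + |h * ∑ m, A m j * AS.mulVec ((ASᵀ * AS)⁻¹.mulVec z) m| :=
        abs_add_le _ _
    _ ≤ |∑ m, A m j * Pr.mulVec e m| + h * γ := by
        gcongr _ + ?_
        rw [abs_mul, abs_of_nonneg hh, hsum]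
        exact mul_le_mul_of_nonneg_left (hrow.trans hγle) hh
end

section
/- If a matrix A satisfies ‖A_{S^c}ᵀ A_S(A_Sᵀ A_S)^{−1}‖_∞ = 0 (i.e., every column outside S is orthogonal to the column span of A_S) and A_Sᵀ A_S is invertible, then for noise-free measurements y = A x* with x* supported on S, any LASSO solution with h > 0 is supported in S. -/
open Matrix Finset

/-- Orthogonal special case (`γ = 0`, `e = 0`) of the no-false-alarm theorem: if every column
of `A` outside `S` is orthogonal to the columns of `A_S`, `A_Sᵀ A_S` is invertible, and
`y = A x*` is noise-free with `x*` supported on `S`, then any LASSO minimizer with `h > 0`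
is supported in `S`. -/
theorem lasso_orthogonal_noise_free
    (Mdim N : ℕ) (A : Matrix (Fin Mdim) (Fin N) ℝ) (h : ℝ) (hh : 0 < h)
    (S : Finset (Fin N)) (xstar : Fin N → ℝ) (hxstar : ∀ i, i ∉ S → xstar i = 0)
    (horth : ∀ j, j ∉ S → ∀ i, i ∈ S → ∑ m, A m j * A m i = 0)
    (hGram : IsUnit ((A.submatrix id (Subtype.val : {x // x ∈ S} → Fin N))ᵀ *
      A.submatrix id (Subtype.val : {x // x ∈ S} → Fin N)))
    (y : Fin Mdim → ℝ) (hy : y = A.mulVec xstar) :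
    ∀ x : Fin N → ℝ,
      (∀ z : Fin N → ℝ,
        (1 / 2) * (∑ m, (y m - A.mulVec x m) ^ 2) + h * ∑ j, |x j| ≤
          (1 / 2) * (∑ m, (y m - A.mulVec z m) ^ 2) + h * ∑ j, |z j|) →
      ∀ j, j ∉ S → x j = 0 := by
  intro x hmin j0 hj0
  by_contra hx0
  set z : Fin N → ℝ := fun i => if i ∈ S then x i else 0 with hzdef
  have hAz : ∀ m, A.mulVec z m = ∑ i ∈ S, A m i * x i := by
    intro m
    simp only [Matrix.mulVec, dotProduct, hzdef, mul_ite, mul_zero]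
    rw [Finset.sum_ite_mem, Finset.univ_inter]
  set w : Fin Mdim → ℝ := fun m => ∑ i ∈ Sᶜ, A m i * x i with hwdef
  have hAx : ∀ m, A.mulVec x m = A.mulVec z m + w m := by
    intro m
    rw [hAz]
    simp only [Matrix.mulVec, dotProduct, hwdef]
    exact (Finset.sum_add_sum_compl S _).symm
  have hym : ∀ m, y m - A.mulVec z m = ∑ i ∈ S, A m i * (xstar i - x i) := by
    intro m
    rw [hAz, hy]
    simp only [Matrix.mulVec, dotProduct, mul_sub, Finset.sum_sub_distrib]
    congr 1
    exact (Finset.sum_subset (Finset.subset_univ S)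
      (fun i _ hi => by rw [hxstar i hi, mul_zero])).symm
  have hcross : ∑ m, (y m - A.mulVec z m) * w m = 0 := by
    have : ∀ m, (y m - A.mulVec z m) * w m =
        ∑ i ∈ S, ∑ j ∈ Sᶜ, (xstar i - x i) * x j * (A m j * A m i) := by
      intro m
      rw [hym, hwdef, Finset.sum_mul_sum]
      apply Finset.sum_congr rfl; intro i _
      apply Finset.sum_congr rfl; intro j _
      ring
    simp only [this]
    rw [Finset.sum_comm]
    refine Finset.sum_eq_zero fun i hi => ?_
    rw [Finset.sum_comm]
    refine Finset.sum_eq_zero fun j hj => ?_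
    rw [← Finset.mul_sum, horth j (Finset.mem_compl.mp hj) i hi, mul_zero]
  have hquad : ∑ m, (y m - A.mulVec z m) ^ 2 ≤ ∑ m, (y m - A.mulVec x m) ^ 2 := by
    have hexp : ∑ m, (y m - A.mulVec x m) ^ 2 =
        ∑ m, (y m - A.mulVec z m) ^ 2 - 2 * ∑ m, (y m - A.mulVec z m) * w m
          + ∑ m, w m ^ 2 := by
      rw [Finset.mul_sum, ← Finset.sum_sub_distrib, ← Finset.sum_add_distrib]
      apply Finset.sum_congr rfl; intro m _
      rw [hAx m]; ring
    rw [hexp, hcross]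
    have : 0 ≤ ∑ m, w m ^ 2 := Finset.sum_nonneg fun m _ => sq_nonneg _
    linarith
  have hzl1 : ∑ j, |z j| = ∑ j ∈ S, |x j| := by
    simp only [hzdef, apply_ite abs, abs_zero]
    rw [Finset.sum_ite_mem, Finset.univ_inter]
  have hl1 : ∑ j, |z j| < ∑ j, |x j| := by
    rw [hzl1, ← Finset.sum_add_sum_compl S fun j => |x j|]
    have h1 : 0 < ∑ j ∈ Sᶜ, |x j| := by
      have := Finset.single_le_sum (f := fun j => |x j|)
        (fun j _ => abs_nonneg _) (Finset.mem_compl.mpr hj0)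
      have := abs_pos.mpr hx0
      linarith
    linarith
  have := hmin z
  nlinarith
end
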